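/- Let A = [[0,1],[−1,0]] and B = [[0,i],[i,0]], and set F₁ = ((1/√2)·A, 0), G₁ = ((1/√2)·B, 0), F₂ = (0, A), G₂ = (0, B), and V₁ = ((1/5)·diag(2i, −2i), (1/5)·diag(i, −i)), all elements of 𝔰𝔲(2)⊕𝔰𝔲(2). Then the five vectors Dρ(F₁)·p, Dρ(G₁)·p, Dρ(F₂)·p, Dρ(G₂)·p, Dρ(V₁)·p in ℂ⁶ form an orthonormal family with respect to the real inner product Re⟪·,·⟫, and each of them is Re⟪·,·⟫-orthogonal to both p and i·p. -/

import Mathlib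

open Matrix Kronecker

/-- The induced action of a `2×2` matrix `X` on `S²(ℂ²)` in the orthonormal basis
`(e₁², √2·e₁e₂, e₂²)`. -/
noncomputable def sMat (X : Matrix (Fin 2) (Fin 2) ℂ) : Matrix (Fin 3) (Fin 3) ℂ :=
  !![2 * X 0 0, (Real.sqrt 2 : ℂ) * X 0 1, 0;
     (Real.sqrt 2 : ℂ) * X 1 0, X 0 0 + X 1 1, (Real.sqrt 2 : ℂ) * X 0 1;
     0, (Real.sqrt 2 : ℂ) * X 1 0, 2 * X 1 1]

/-- The infinitesimal action `Dρ(X,Y) = s(X) ⊗ I₂ + I₃ ⊗ Y` on `ℂ⁶ = ℂ³ ⊗ ℂ²`. -/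
noncomputable def Drho (X Y : Matrix (Fin 2) (Fin 2) ℂ) :
    Matrix (Fin 3 × Fin 2) (Fin 3 × Fin 2) ℂ :=
  sMat X ⊗ₖ (1 : Matrix (Fin 2) (Fin 2) ℂ) + (1 : Matrix (Fin 3) (Fin 3) ℂ) ⊗ₖ Y

/-- The point `p = (1/√2)(u₁⊗e₁ + u₃⊗e₂) = (1/√2, 0, 0, 0, 0, 1/√2) ∈ ℂ⁶`. -/
noncomputable def pvec : Fin 3 × Fin 2 → ℂ :=
  fun x => if x = (0, 0) ∨ x = (2, 1) then (1 / (Real.sqrt 2 : ℂ)) else 0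

/-- The real part of the standard Hermitian inner product on `ℂ⁶`. -/
noncomputable def rip (u v : Fin 3 × Fin 2 → ℂ) : ℝ :=
  (∑ k : Fin 3 × Fin 2, u k * star (v k)).re



noncomputable def aa : ℂ := 1 / (Real.sqrt 2 : ℂ)

lemma hstar_aa : star aa = aa := by simp [aa]

/-- The five explicit vectors. -/
noncomputable def ws : Fin 5 → (Fin 3 × Fin 2 → ℂ) :=
  ![(fun x => if x = (1,0) then -aa else if x = (1,1) then aa else 0),
    (fun x => if x = (1,0) then Complex.I * aa else if x = (1,1) then Complex.I * aa else 0),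
    (fun x => if x = (0,1) then -aa else if x = (2,0) then aa else 0),
    (fun x => if x = (0,1) then Complex.I * aa else if x = (2,0) then Complex.I * aa else 0),
    (fun x => if x = (0,0) then Complex.I * aa else if x = (2,1) then -(Complex.I * aa) else 0)]

lemma hv1 : (Drho ((1 / (Real.sqrt 2 : ℂ)) • !![0, 1; -1, 0]) 0).mulVec pvec = ws 0 := by
  funext x
  fin_cases x <;>
    simp [Drho, sMat, pvec, mulVec, dotProduct, Fintype.sum_prod_type, ws,
      Fin.sum_univ_succ, Matrix.one_apply, aa, Prod.ext_iff, Fin.ext_iff, -Fin.val_eq_zero_iff]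

lemma hv2 : (Drho ((1 / (Real.sqrt 2 : ℂ)) • !![0, Complex.I; Complex.I, 0]) 0).mulVec pvec
    = ws 1 := by
  funext x
  fin_cases x <;>
    simp [Drho, sMat, pvec, mulVec, dotProduct, Fintype.sum_prod_type, ws,
      Fin.sum_univ_succ, Matrix.one_apply, aa, Prod.ext_iff, Fin.ext_iff, -Fin.val_eq_zero_iff]

lemma hv3 : (Drho 0 !![0, 1; -1, 0]).mulVec pvec = ws 2 := by
  funext x
  fin_cases x <;>
    simp [Drho, sMat, pvec, mulVec, dotProduct, Fintype.sum_prod_type, ws,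
      Fin.sum_univ_succ, Matrix.one_apply, aa, Prod.ext_iff, Fin.ext_iff, -Fin.val_eq_zero_iff,
      Matrix.vecHead, Matrix.vecTail]

lemma hv4 : (Drho 0 !![0, Complex.I; Complex.I, 0]).mulVec pvec = ws 3 := by
  funext x
  fin_cases x <;>
    simp [Drho, sMat, pvec, mulVec, dotProduct, Fintype.sum_prod_type, ws,
      Fin.sum_univ_succ, Matrix.one_apply, aa, Prod.ext_iff, Fin.ext_iff, -Fin.val_eq_zero_iff,
      Matrix.vecHead, Matrix.vecTail]

lemma hv5 : (Drho ((1 / 5 : ℂ) • !![2 * Complex.I, 0; 0, -(2 * Complex.I)])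
      ((1 / 5 : ℂ) • !![Complex.I, 0; 0, -Complex.I])).mulVec pvec = ws 4 := by
  funext x
  fin_cases x <;>
    simp [Drho, sMat, pvec, mulVec, dotProduct, Fintype.sum_prod_type, ws,
      Fin.sum_univ_succ, Matrix.one_apply, aa, Prod.ext_iff, Fin.ext_iff, -Fin.val_eq_zero_iff,
      Matrix.vecHead, Matrix.vecTail] <;>
    ring_nf

lemma hp : pvec = fun x => if x = (0,0) then aa else if x = (2,1) then aa else 0 := by
  funext x
  fin_cases x <;> simp [pvec, aa, Prod.ext_iff, Fin.ext_iff, -Fin.val_eq_zero_iff]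

set_option maxHeartbeats 1000000 in
lemma ws_orthonormal : ∀ i j : Fin 5, rip (ws i) (ws j) = if i = j then 1 else 0 := by
  intro i j
  fin_cases i <;> fin_cases j <;>
    simp [rip, ws, Fintype.sum_prod_type, Fin.sum_univ_succ, Prod.ext_iff, Fin.ext_iff, -Fin.val_eq_zero_iff,
      hstar_aa, Complex.ext_iff, aa, Complex.div_re, Complex.div_im, Complex.normSq] <;>
    (try rw [if_neg (by decide)]) <;> (try rw [if_pos (by decide)]) <;> (try norm_num) <;>
    nlinarith [Real.mul_self_sqrt (show (0:ℝ) ≤ 2 by norm_num), Real.sqrt_nonneg 2]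

set_option maxHeartbeats 1000000 in
lemma ws_horizontal : ∀ i : Fin 5, rip (ws i) pvec = 0 ∧ rip (ws i) (Complex.I • pvec) = 0 := by
  intro i
  rw [hp]
  fin_cases i <;>
    constructor <;>
    simp [rip, ws, Fintype.sum_prod_type, Fin.sum_univ_succ, Prod.ext_iff, Fin.ext_iff, -Fin.val_eq_zero_iff,
      hstar_aa, Complex.ext_iff, aa, Complex.div_re, Complex.div_im, Complex.normSq] <;>
    (try rw [if_neg (by decide)]) <;> (try rw [if_pos (by decide)]) <;> (try norm_num) <;>
    nlinarith [Real.mul_self_sqrt (show (0:ℝ) ≤ 2 by norm_num), Real.sqrt_nonneg 2]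

/-- Let `A = [[0,1],[−1,0]]`, `B = [[0,i],[i,0]]`, and set `F₁ = ((1/√2)·A, 0)`,
`G₁ = ((1/√2)·B, 0)`, `F₂ = (0, A)`, `G₂ = (0, B)`, and
`V₁ = ((1/5)·diag(2i, −2i), (1/5)·diag(i, −i))` in `𝔰𝔲(2)⊕𝔰𝔲(2)`. Then the five
vectors `Dρ(F₁)·p, Dρ(G₁)·p, Dρ(F₂)·p, Dρ(G₂)·p, Dρ(V₁)·p` in `ℂ⁶` form an
orthonormal family with respect to the real inner product `Re⟪·,·⟫`, and each of them
is `Re⟪·,·⟫`-orthogonal to both `p` and `i·p`. -/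
theorem horizontal_orthonormal_frame_at_p :
    let A : Matrix (Fin 2) (Fin 2) ℂ := !![0, 1; -1, 0]
    let B : Matrix (Fin 2) (Fin 2) ℂ := !![0, Complex.I; Complex.I, 0]
    let vs : Fin 5 → (Fin 3 × Fin 2 → ℂ) :=
      ![(Drho ((1 / (Real.sqrt 2 : ℂ)) • A) 0).mulVec pvec,
        (Drho ((1 / (Real.sqrt 2 : ℂ)) • B) 0).mulVec pvec,
        (Drho 0 A).mulVec pvec,
        (Drho 0 B).mulVec pvec,
        (Drho ((1 / 5 : ℂ) • !![2 * Complex.I, 0; 0, -(2 * Complex.I)])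
          ((1 / 5 : ℂ) • !![Complex.I, 0; 0, -Complex.I])).mulVec pvec]
    (∀ i j : Fin 5, rip (vs i) (vs j) = if i = j then 1 else 0) ∧
    (∀ i : Fin 5, rip (vs i) pvec = 0 ∧ rip (vs i) (Complex.I • pvec) = 0) := by
  intro A B vs
  have hvs : ∀ i, vs i = ws i := by
    intro i
    fin_cases i <;>
      simp only [vs, A, B, Matrix.cons_val_zero, Matrix.cons_val_one, Matrix.head_cons,
        Matrix.cons_val_two, Matrix.tail_cons, Matrix.cons_val_three, Matrix.cons_val_four,
        hv1, hv2, hv3, hv4, hv5] <;> rfl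
  refine ⟨fun i j => ?_, fun i => ?_⟩
  · rw [hvs i, hvs j]; exact ws_orthonormal i j
  · rw [hvs i]; exact ws_horizontal i
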